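/- arXiv:1705.10658 — 2 statements merged into one kernel-verified Lean document; each statement's English description precedes it below -/
import Mathlib

section
/- Let Q ∈ K⟦x⟧[y] be such that Q|x=0 ≠ 0, let c ∈ K be a root of Q|x=0 of multiplicity m ≥ 1, let s = val_x(Q(c + x·y)), and let Q_c = Q(c + x·y)/x^s. Then deg((Q_c)|x=0) ≤ s ≤ m. -/
open Polynomial PowerSeries

/-- `Q|_{x=0}` : set `x = 0` in every coefficient. -/
noncomputable def atZero {K : Type*} [Field K] (Q : Polynomial (PowerSeries K)) : Polynomial K :=
  Q.map (PowerSeries.constantCoeff (R := K))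

/-- `Q(f + x^t y)` : substitute `f + x^t·y` for `y`. -/
noncomputable def shift {K : Type*} [Field K] (Q : Polynomial (PowerSeries K))
    (f : PowerSeries K) (t : ℕ) : Polynomial (PowerSeries K) :=
  Q.comp (Polynomial.C f + Polynomial.C ((PowerSeries.X : PowerSeries K) ^ t) * Polynomial.X)

/-- `roots(Q, d)`: all of `K⟦x⟧` if `d ≤ 0`, else `{f | Q(f) ≡ 0 mod x^d}`. -/
def seriesRoots {K : Type*} [Field K] (Q : Polynomial (PowerSeries K)) (d : ℤ) :
    Set (PowerSeries K) :=
  {f | 0 < d → (PowerSeries.X : PowerSeries K) ^ d.toNat ∣ Polynomial.eval f Q}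

/-- `(F i)ᵢ` is a basic root set of `Q` to precision `d`. -/
def IsBasicRootSet {K : Type*} [Field K] (Q : Polynomial (PowerSeries K)) (d : ℤ)
    {ι : Type} [Fintype ι] (F : ι → Polynomial K × ℕ) : Prop :=
  if 0 < d then
    (∀ i, Polynomial.C ((PowerSeries.X : PowerSeries K) ^ d.toNat) ∣
        shift Q (((F i).1 : Polynomial K) : PowerSeries K) (F i).2) ∧
    seriesRoots Q d =
      ⋃ i, {g | ∃ h : PowerSeries K,
        g = (((F i).1 : Polynomial K) : PowerSeries K) + (PowerSeries.X : PowerSeries K) ^ (F i).2 * h}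
  else Set.range F = {(0, 0)}

/-- the root multiplicity of `(f, t)` in `Q` is `m`. -/
def HasRootMultiplicity {K : Type*} [Field K] (Q : Polynomial (PowerSeries K))
    (f : Polynomial K) (t : ℕ) (m : ℕ) : Prop :=
  ∃ (g : Polynomial K) (c : K) (s : ℕ) (R : Polynomial (PowerSeries K)),
    f = g + Polynomial.C c * Polynomial.X ^ (t - 1) ∧
    g.degree < ((t - 1 : ℕ) : WithBot ℕ) ∧
    shift Q ((g : Polynomial K) : PowerSeries K) (t - 1)
      = Polynomial.C ((PowerSeries.X : PowerSeries K) ^ s) * R ∧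
    atZero R ≠ 0 ∧
    m = (atZero R).rootMultiplicity c

/-- `(F i)ᵢ` is a reduced root set of `Q` to precision `d`. -/
def IsReducedRootSet {K : Type*} [Field K] (Q : Polynomial (PowerSeries K)) (d : ℤ)
    {ι : Type} [Fintype ι] (F : ι → Polynomial K × ℕ) : Prop :=
  IsBasicRootSet Q d F ∧
  (0 < d → ∃ m : ι → ℕ,
    (∀ i, (F i).1 ≠ 0) ∧
    (∀ i, HasRootMultiplicity Q (F i).1 (F i).2 (m i)) ∧
    (∀ i, 1 ≤ m i) ∧
    (∀ i (s : ℕ) (Qi : Polynomial (PowerSeries K)),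
      shift Q (((F i).1 : Polynomial K) : PowerSeries K) (F i).2
        = Polynomial.C ((PowerSeries.X : PowerSeries K) ^ s) * Qi →
      atZero Qi ≠ 0 → (atZero Qi).natDegree ≤ m i) ∧
    (∑ i, m i) ≤ (atZero Q).natDegree)
lemma coeff_comp_C_mul_X {R : Type*} [CommSemiring R] (p : R[X]) (g : R) (j : ℕ) :
    (p.comp (Polynomial.C g * Polynomial.X)).coeff j = p.coeff j * g ^ j := by
  rw [Polynomial.comp, Polynomial.eval₂_eq_sum, Polynomial.sum, Polynomial.finset_sum_coeff]
  simp only [mul_pow, ← Polynomial.C_pow, ← mul_assoc, ← Polynomial.C_mul,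
    Polynomial.coeff_C_mul, Polynomial.coeff_X_pow, mul_ite, mul_one, mul_zero]
  rw [Finset.sum_ite_eq p.support j]
  split_ifs with h
  · rfl
  · simp [Polynomial.notMem_support_iff.mp h]

lemma taylor_coeff_rootMultiplicity_ne_zero {K : Type*} [Field K] (P : Polynomial K)
    (hP : P ≠ 0) (c : K) :
    ((Polynomial.taylor c) P).coeff (P.rootMultiplicity c) ≠ 0 := by
  set m := P.rootMultiplicity c
  set R := P /ₘ (Polynomial.X - Polynomial.C c) ^ m with hR
  have hfac : (Polynomial.X - Polynomial.C c) ^ m * R = P :=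
    Polynomial.pow_mul_divByMonic_rootMultiplicity_eq P c
  have : (Polynomial.taylor c) P = Polynomial.X ^ m * (Polynomial.taylor c) R := by
    have hx : (Polynomial.taylor c) ((Polynomial.X - Polynomial.C c : Polynomial K) ^ m)
        = Polynomial.X ^ m := by
      induction m with
      | zero => simp [Polynomial.taylor_one]
      | succ n ih =>
        rw [pow_succ, Polynomial.taylor_mul, ih, pow_succ]
        congr 1
        simp [Polynomial.taylor_apply, Polynomial.sub_comp]
    rw [← hfac, Polynomial.taylor_mul, hx]
  rw [this]
  have := Polynomial.coeff_X_pow_mul ((Polynomial.taylor c) R) m 0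
  rw [zero_add] at this
  rw [this, Polynomial.taylor_coeff_zero]
  exact Polynomial.eval_divByMonic_pow_rootMultiplicity_ne_zero c hP

/-- if `c` is a root of `Q|x=0` of multiplicity `m ≥ 1`,
`s = val_x(Q(c + x·y))` and `Q_c = Q(c + x·y)/x^s`, then `deg((Q_c)|x=0) ≤ s ≤ m`. -/
theorem degree_shift_le_multiplicity {K : Type*} [Field K]
    (Q : Polynomial (PowerSeries K)) (h0 : atZero Q ≠ 0)
    (c : K) (m : ℕ) (hm : (atZero Q).rootMultiplicity c = m) (hm1 : 1 ≤ m)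
    (s : ℕ) (Qc : Polynomial (PowerSeries K))
    (hshift : shift Q (PowerSeries.C (R := K) c) 1
      = Polynomial.C ((PowerSeries.X : PowerSeries K) ^ s) * Qc)
    (hval : atZero Qc ≠ 0) :
    (atZero Qc).natDegree ≤ s ∧ s ≤ m := by
  set T := Q.comp (Polynomial.X + Polynomial.C (PowerSeries.C (R := K) c)) with hT
  have h1 : shift Q (PowerSeries.C (R := K) c) 1
      = T.comp (Polynomial.C (PowerSeries.X : PowerSeries K) * Polynomial.X) := by
    rw [hT, shift, Polynomial.comp_assoc]
    congr 1
    simp [Polynomial.add_comp]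
    ring
  have key : ∀ j : ℕ, (PowerSeries.X : PowerSeries K) ^ j * T.coeff j
      = (PowerSeries.X : PowerSeries K) ^ s * Qc.coeff j := by
    intro j
    have := congrArg (fun p => Polynomial.coeff p j) (h1.symm.trans hshift)
    simp only [coeff_comp_C_mul_X, Polynomial.coeff_C_mul] at this
    rw [mul_comm]
    exact this
  have hatT : atZero T = (Polynomial.taylor c) (atZero Q) := by
    rw [Polynomial.taylor_apply, hT]
    unfold atZero
    rw [Polynomial.map_comp]
    congr 1
    simp
  have hTm : (PowerSeries.constantCoeff (R := K)) (T.coeff m) ≠ 0 := by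
    have : (PowerSeries.constantCoeff (R := K)) (T.coeff m) = (atZero T).coeff m := by
      simp [atZero, Polynomial.coeff_map]
    rw [this, hatT, ← hm]
    exact taylor_coeff_rootMultiplicity_ne_zero _ h0 c
  constructor
  · rw [Polynomial.natDegree_le_iff_coeff_eq_zero]
    intro j hj
    have hXs : (PowerSeries.X : PowerSeries K) ^ s ≠ 0 :=
      pow_ne_zero _ PowerSeries.X_ne_zero
    have hj' : j = s + (j - s) := by omega
    have : Qc.coeff j = (PowerSeries.X : PowerSeries K) ^ (j - s) * T.coeff j := by
      apply mul_left_cancel₀ hXs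
      rw [← key j, ← mul_assoc, ← pow_add, ← hj']
    have hjs : j - s ≠ 0 := by omega
    simp [atZero, Polynomial.coeff_map, this, hjs]
  · by_contra hs
    push_neg at hs
    have := congrArg (PowerSeries.coeff (R := K) m) (key m)
    rw [PowerSeries.coeff_X_pow_mul' (T.coeff m) m m,
        PowerSeries.coeff_X_pow_mul' (Qc.coeff m) s m] at this
    simp only [le_refl, if_pos, Nat.sub_self, if_neg (not_le.mpr hs)] at this
    exact hTm (by simpa using this)
end

section
/- For Q ∈ K⟦x⟧[y] and c ∈ K, every coefficient (in K⟦x⟧) of y^β in the polynomial Q(c + x·y) is divisible by x^β. Moreover, if Q|x=0 ≠ 0 and c is a root of Q|x=0 of multiplicity exactly m, then the coefficient of y^m in Q(c + x·y) has x-valuation exactly m. -/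
open Polynomial PowerSeries

lemma coeff_comp_C_mul_X_s5 {R : Type*} [CommRing R] (P : R[X]) (r : R) (n : ℕ) :
    (P.comp (Polynomial.C r * Polynomial.X)).coeff n = r ^ n * P.coeff n := by
  have key : ∀ (a : R) (k : ℕ), (Polynomial.C a * (Polynomial.C r * Polynomial.X) ^ k).coeff n
      = if n = k then a * r ^ k else 0 := by
    intro a k
    rw [mul_pow, ← Polynomial.C_pow, ← mul_assoc, ← Polynomial.C_mul, Polynomial.coeff_C_mul,
      Polynomial.coeff_X_pow, mul_ite, mul_one, mul_zero]
  rw [comp, eval₂_eq_sum, Polynomial.sum, finset_sum_coeff]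
  simp only [key]
  rw [Finset.sum_ite_eq]
  by_cases h : n ∈ P.support
  · simp [h, mul_comm]
  · simp [h, Polynomial.notMem_support_iff.mp h]

lemma X_pow_dvd_taylor_iff {R : Type*} [CommRing R] (P : R[X]) (c : R) (n : ℕ) :
    (Polynomial.X : R[X]) ^ n ∣ Polynomial.taylor c P ↔ (Polynomial.X - Polynomial.C c) ^ n ∣ P := by
  constructor
  · rintro ⟨q, hq⟩
    refine ⟨Polynomial.taylor (-c) q, ?_⟩
    have := congrArg (Polynomial.taylor (-c)) hq
    rw [taylor_taylor, neg_add_cancel, taylor_zero] at this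
    rw [this]
    have : Polynomial.taylor (-c) (Polynomial.X ^ n * q)
        = (Polynomial.taylorAlgHom (-c)) (Polynomial.X ^ n * q) := rfl
    rw [this, map_mul, map_pow]
    simp [sub_eq_add_neg]
  · rintro ⟨q, hq⟩
    refine ⟨Polynomial.taylor c q, ?_⟩
    rw [hq]
    have : Polynomial.taylor c ((Polynomial.X - Polynomial.C c) ^ n * q)
        = (Polynomial.taylorAlgHom c) ((Polynomial.X - Polynomial.C c) ^ n * q) := rfl
    rw [this, map_mul, map_pow]
    simp

lemma my_atZero_taylor {K : Type*} [Field K] (Q : Polynomial (PowerSeries K)) (c : K) :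
    atZero (Polynomial.taylor (PowerSeries.C (R := K) c) Q) = Polynomial.taylor c (atZero Q) := by
  simp only [atZero, taylor_apply, Polynomial.map_comp, Polynomial.map_add, Polynomial.map_X,
    Polynomial.map_C, PowerSeries.constantCoeff_C]

/-- every coefficient of `y^β` in `Q(c + x·y)` is divisible by `x^β`;
moreover if `Q|x=0 ≠ 0` and `c` is a root of `Q|x=0` of multiplicity exactly `m`, then
the coefficient of `y^m` in `Q(c + x·y)` has `x`-valuation exactly `m`. -/
theorem coeff_shift_valuation {K : Type*} [Field K]
    (Q : Polynomial (PowerSeries K)) (c : K) :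
    (∀ β : ℕ, (PowerSeries.X : PowerSeries K) ^ β ∣ (shift Q (PowerSeries.C (R := K) c) 1).coeff β) ∧
    (atZero Q ≠ 0 → (atZero Q).IsRoot c → ∀ m : ℕ, (atZero Q).rootMultiplicity c = m →
      (PowerSeries.X : PowerSeries K) ^ m ∣ (shift Q (PowerSeries.C (R := K) c) 1).coeff m ∧
      ¬ (PowerSeries.X : PowerSeries K) ^ (m + 1) ∣ (shift Q (PowerSeries.C (R := K) c) 1).coeff m) := by
  have hshift : ∀ β : ℕ, (shift Q (PowerSeries.C (R := K) c) 1).coeff β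
      = (PowerSeries.X : PowerSeries K) ^ β * (Polynomial.taylor (PowerSeries.C (R := K) c) Q).coeff β := by
    intro β
    have h1 : shift Q (PowerSeries.C (R := K) c) 1
        = (Polynomial.taylor (PowerSeries.C (R := K) c) Q).comp
          (Polynomial.C (PowerSeries.X : PowerSeries K) * Polynomial.X) := by
      rw [shift, taylor_apply, comp_assoc, add_comp, X_comp, C_comp, pow_one, add_comm]
    rw [h1, coeff_comp_C_mul_X_s5]
  constructor
  · intro β
    rw [hshift β]
    exact dvd_mul_right _ _
  · intro hQ0 _ m hm
    set S : PowerSeries K := (Polynomial.taylor (PowerSeries.C (R := K) c) Q).coeff m with hS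
    have hcc : PowerSeries.constantCoeff (R := K) S = (Polynomial.taylor c (atZero Q)).coeff m := by
      rw [hS, ← my_atZero_taylor Q c, atZero, Polynomial.coeff_map]
    have hdvd1 : (Polynomial.X : K[X]) ^ m ∣ Polynomial.taylor c (atZero Q) := by
      rw [X_pow_dvd_taylor_iff]
      rw [← hm]
      exact Polynomial.pow_rootMultiplicity_dvd _ _
    have hdvd2 : ¬ (Polynomial.X : K[X]) ^ (m + 1) ∣ Polynomial.taylor c (atZero Q) := by
      rw [X_pow_dvd_taylor_iff]
      rw [← hm]
      exact Polynomial.pow_rootMultiplicity_not_dvd hQ0 c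
    have hS0 : PowerSeries.constantCoeff (R := K) S ≠ 0 := by
      rw [hcc]
      intro hzero
      apply hdvd2
      rw [Polynomial.X_pow_dvd_iff]
      intro d hd
      rcases Nat.lt_succ_iff_lt_or_eq.mp hd with hd' | rfl
      · exact Polynomial.X_pow_dvd_iff.mp hdvd1 d hd'
      · exact hzero
    have hXm : (PowerSeries.X : PowerSeries K) ^ m ≠ 0 := pow_ne_zero _ PowerSeries.X_ne_zero
    refine ⟨by rw [hshift m]; exact dvd_mul_right _ _, ?_⟩
    rw [hshift, pow_succ, mul_dvd_mul_iff_left hXm, PowerSeries.X_dvd_iff]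
    exact hS0
end
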